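/- arXiv:2507.23482 — 2 statements merged into one kernel-verified Lean document; each statement's English description precedes it below -/
import Mathlib

section
/- Let m ≥ 1 and let e_1,…,e_m be nonnegative integers with e_1 + ⋯ + e_m = m. Then the monomial x_1^{e_1}⋯x_m^{e_m} equals 0 in Q_m if and only if there exists d with 1 ≤ d ≤ m such that e_1 + ⋯ + e_d > d. -/
open MvPolynomial Finset
open Fin.NatCast

noncomputable section

/-- The defining ideal of `Q_m`: generated by `x_1^2` and `x_i^2 - x_{i-1} x_i` for `2 ≤ i ≤ m`
(variables are 1-based; `X ((i-1 : ℕ) : Fin m)` is `x_i`). -/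
def Qrel (m : ℕ) [NeZero m] : Ideal (MvPolynomial (Fin m) (ZMod 2)) :=
  Ideal.span ((fun i : ℕ =>
      X ((i - 1 : ℕ) : Fin m) ^ 2 -
        (if i = 1 then 0 else X ((i - 2 : ℕ) : Fin m) * X ((i - 1 : ℕ) : Fin m))) ''
    Set.Icc 1 m)

/-- The ring `Q_m`. -/
abbrev Qring (m : ℕ) [NeZero m] : Type :=
  MvPolynomial (Fin m) (ZMod 2) ⧸ Qrel m

/-- The image of `x_i` (1-based, for `1 ≤ i ≤ m`) in `Q_m`. -/
def xQ (m : ℕ) [NeZero m] (i : ℕ) : Qring m :=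
  Ideal.Quotient.mk (Qrel m) (X ((i - 1 : ℕ) : Fin m))

set_option linter.unusedSectionVars false
set_option linter.unusedVariables false

section Aux
variable {m : ℕ} [NeZero m]

lemma one_le_m : 1 ≤ m := Nat.one_le_iff_ne_zero.mpr (NeZero.ne m)

lemma mk_rel {i : ℕ} (h1 : 1 ≤ i) (h2 : i ≤ m) :
    (Ideal.Quotient.mk (Qrel m)) (X ((i - 1 : ℕ) : Fin m) ^ 2) =
      Ideal.Quotient.mk (Qrel m)
        (if i = 1 then 0 else X ((i - 2 : ℕ) : Fin m) * X ((i - 1 : ℕ) : Fin m)) := by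
  rw [Ideal.Quotient.eq]
  exact Ideal.subset_span ⟨i, Set.mem_Icc.2 ⟨h1, h2⟩, rfl⟩

lemma xQ_one_sq : xQ m 1 ^ 2 = 0 := by
  have h := mk_rel (m := m) (i := 1) le_rfl one_le_m
  rw [if_pos rfl, map_zero, map_pow] at h
  exact h

lemma xQ_sq {i : ℕ} (h2 : 2 ≤ i) (hm : i ≤ m) :
    xQ m i ^ 2 = xQ m (i - 1) * xQ m i := by
  have h := mk_rel (m := m) (le_trans one_le_two h2) hm
  rw [if_neg (by omega), map_pow, map_mul] at h
  have hv : i - 1 - 1 = i - 2 := by omega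
  simpa [xQ, hv] using h

lemma prod_split {β : Type*} [CommMonoid β] (f : ℕ → β) {d : ℕ} (h2 : 2 ≤ d) (hdm : d ≤ m) :
    ∏ i ∈ Icc 1 m, f i
      = f (d - 1) * f d * ∏ i ∈ ((Icc 1 m).erase d).erase (d - 1), f i := by
  rw [← Finset.mul_prod_erase (Icc 1 m) f (show d ∈ Icc 1 m by rw [mem_Icc]; omega),
      ← Finset.mul_prod_erase _ f
        (show d - 1 ∈ (Icc 1 m).erase d by rw [Finset.mem_erase, mem_Icc]; omega)]
  rw [← mul_assoc, mul_comm (f d) (f (d - 1))]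

lemma sum_split (f : ℕ → ℕ) {d : ℕ} (h2 : 2 ≤ d) (hdm : d ≤ m) :
    ∑ i ∈ Icc 1 m, f i
      = f (d - 1) + f d + ∑ i ∈ ((Icc 1 m).erase d).erase (d - 1), f i := by
  rw [← Finset.add_sum_erase (Icc 1 m) f (show d ∈ Icc 1 m by rw [mem_Icc]; omega),
      ← Finset.add_sum_erase _ f
        (show d - 1 ∈ (Icc 1 m).erase d by rw [Finset.mem_erase, mem_Icc]; omega)]
  ring

lemma sum_Icc_top2 (f : ℕ → ℕ) {d : ℕ} (h2 : 2 ≤ d) :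
    ∑ i ∈ Icc 1 d, f i = ∑ i ∈ Icc 1 (d - 2), f i + f (d - 1) + f d := by
  have ha := Finset.sum_Icc_succ_top (a := 1) (b := d - 1) (by omega) f
  rw [show d - 1 + 1 = d by omega] at ha
  have hb := Finset.sum_Icc_succ_top (a := 1) (b := d - 2) (by omega) f
  rw [show d - 2 + 1 = d - 1 by omega] at hb
  omega

lemma forward_aux : ∀ (N : ℕ) (e : ℕ → ℕ), (∑ i ∈ Icc 1 m, i * e i) = N →
    (∃ d, d ≤ m ∧ d < ∑ i ∈ Icc 1 d, e i) →
    ∏ i ∈ Icc 1 m, xQ m i ^ e i = 0 := by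
  intro N
  induction N using Nat.strong_induction_on with
  | _ N ih =>
    intro e hN hex
    classical
    obtain ⟨d, ⟨hdm, hdv⟩, hdmin⟩ :
        ∃ d, (d ≤ m ∧ d < ∑ i ∈ Icc 1 d, e i) ∧
          ∀ d' < d, ¬(d' ≤ m ∧ d' < ∑ i ∈ Icc 1 d', e i) :=
      ⟨Nat.find hex, Nat.find_spec hex, fun d' h => Nat.find_min hex h⟩
    have hd1 : 1 ≤ d := by
      rcases Nat.eq_zero_or_pos d with h | h
      · rw [h] at hdv; simp at hdv
      · exact h
    by_cases hcase : d = 1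
    · have he1 : 2 ≤ e 1 := by
        rw [hcase] at hdv
        simp at hdv; omega
      have hmem : 1 ∈ Icc 1 m := by rw [mem_Icc]; exact ⟨le_rfl, one_le_m⟩
      rw [← Finset.mul_prod_erase _ _ hmem]
      have hz : xQ m 1 ^ e 1 = 0 := by
        have h1 : xQ m 1 ^ e 1 = xQ m 1 ^ 2 * xQ m 1 ^ (e 1 - 2) := by
          rw [← pow_add]; congr 1; omega
        rw [h1, xQ_one_sq, zero_mul]
      rw [hz, zero_mul]
    · have hd2 : 2 ≤ d := by omega
      have hmin : ¬ (d - 1 ≤ m ∧ d - 1 < ∑ i ∈ Icc 1 (d - 1), e i) :=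
        hdmin (d - 1) (by omega)
      have hsum : ∑ i ∈ Icc 1 (d - 1), e i ≤ d - 1 := by
        by_contra h
        exact hmin ⟨by omega, by omega⟩
      have hsplit : ∑ i ∈ Icc 1 d, e i = ∑ i ∈ Icc 1 (d - 1), e i + e d := by
        have ha := Finset.sum_Icc_succ_top (a := 1) (b := d - 1) (by omega) e
        rw [show d - 1 + 1 = d by omega] at ha
        omega
      have hed : 2 ≤ e d := by omega
      set e' : ℕ → ℕ := fun i =>
        if i = d - 1 then e (d - 1) + 1 else if i = d then e d - 1 else e i with he'
      have he'd : e' d = e d - 1 := by simp [he']; omega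
      have he'd1 : e' (d - 1) = e (d - 1) + 1 := by simp [he']
      have hoff : ∀ x, x ≠ d - 1 → x ≠ d → e' x = e x := by
        intro x hx1 hx2
        simp only [he']
        rw [if_neg hx1, if_neg hx2]
      have hoff' : ∀ x ∈ ((Icc 1 m).erase d).erase (d - 1), e' x = e x := by
        intro x hx
        rw [Finset.mem_erase, Finset.mem_erase] at hx
        exact hoff x hx.1 hx.2.1
      have hprod : ∏ i ∈ Icc 1 m, xQ m i ^ e i = ∏ i ∈ Icc 1 m, xQ m i ^ e' i := by
        rw [prod_split (f := fun i => xQ m i ^ e i) hd2 hdm,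
            prod_split (f := fun i => xQ m i ^ e' i) hd2 hdm]
        have hR : ∏ i ∈ ((Icc 1 m).erase d).erase (d - 1), xQ m i ^ e i
            = ∏ i ∈ ((Icc 1 m).erase d).erase (d - 1), xQ m i ^ e' i :=
          Finset.prod_congr rfl (fun x hx => by rw [hoff' x hx])
        rw [hR]
        congr 1
        rw [he'd, he'd1]
        have key : xQ m d ^ e d = xQ m (d - 1) * xQ m d ^ (e d - 1) := by
          have h1 : xQ m d ^ e d = xQ m d ^ 2 * xQ m d ^ (e d - 2) := by
            rw [← pow_add]; congr 1; omega
          have h3 : xQ m d ^ (e d - 1) = xQ m d * xQ m d ^ (e d - 2) := by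
            rw [← pow_succ']; congr 1; omega
          rw [h1, xQ_sq hd2 hdm, h3, mul_assoc]
        rw [key, pow_succ]
        ring
      rw [hprod]
      have hW : ∑ i ∈ Icc 1 m, i * e' i + 1 = N := by
        rw [← hN, sum_split (fun i => i * e i) hd2 hdm,
            sum_split (fun i => i * e' i) hd2 hdm]
        have hR : ∑ i ∈ ((Icc 1 m).erase d).erase (d - 1), i * e' i
            = ∑ i ∈ ((Icc 1 m).erase d).erase (d - 1), i * e i :=
          Finset.sum_congr rfl (fun x hx => by rw [hoff' x hx])
        rw [hR, he'd, he'd1]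
        have h1 : (d - 1) * (e (d - 1) + 1) = (d - 1) * e (d - 1) + (d - 1) := by ring
        have h2 : d * (e d - 1) + d = d * e d := by
          rw [← Nat.mul_succ]
          congr 1
          omega
        omega
      have hN1 : N - 1 < N := by omega
      apply ih (N - 1) hN1 e' (by omega)
      refine ⟨d, hdm, ?_⟩
      have hsum' : ∑ i ∈ Icc 1 d, e' i = ∑ i ∈ Icc 1 d, e i := by
        rw [sum_Icc_top2 e' hd2, sum_Icc_top2 e hd2]
        have hR : ∑ i ∈ Icc 1 (d - 2), e' i = ∑ i ∈ Icc 1 (d - 2), e i :=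
          Finset.sum_congr rfl (fun x hx => by
            rw [mem_Icc] at hx
            exact hoff x (by omega) (by omega))
        rw [hR, he'd, he'd1]
        omega
      omega


def pSum (d : ℕ) (ν : Fin m →₀ ℕ) : ℕ := ∑ k : Fin m, if (k : ℕ) < d then ν k else 0

lemma pSum_add (d : ℕ) (μ ν : Fin m →₀ ℕ) : pSum d (μ + ν) = pSum d μ + pSum d ν := by
  unfold pSum
  rw [← Finset.sum_add_distrib]
  apply Finset.sum_congr rfl
  intro k _
  by_cases h : (k : ℕ) < d <;> simp [h]

lemma pSum_single (d : ℕ) (a : Fin m) (c : ℕ) :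
    pSum d (Finsupp.single a c) = if (a : ℕ) < d then c else 0 := by
  unfold pSum
  rw [Finset.sum_eq_single a]
  · rw [Finsupp.single_apply, if_pos rfl]
  · intro b _ hb
    rw [Finsupp.single_apply, if_neg (Ne.symm hb)]
    simp
  · simp

lemma pSum_mono_d {d d' : ℕ} (h : d ≤ d') (ν : Fin m →₀ ℕ) : pSum d ν ≤ pSum d' ν := by
  apply Finset.sum_le_sum
  intro k _
  by_cases hk : (k : ℕ) < d
  · rw [if_pos hk, if_pos (lt_of_lt_of_le hk h)]
  · rw [if_neg hk]
    exact Nat.zero_le _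

lemma pSum_mono_nu {d : ℕ} {μ ν : Fin m →₀ ℕ} (h : μ ≤ ν) : pSum d μ ≤ pSum d ν := by
  apply Finset.sum_le_sum
  intro k _
  by_cases hk : (k : ℕ) < d
  · rw [if_pos hk, if_pos hk]
    exact h k
  · rw [if_neg hk, if_neg hk]

def AdmP (ν : Fin m →₀ ℕ) : Prop := ∀ d, 1 ≤ d → d ≤ m → pSum d ν ≤ d

open scoped Classical in
def Dset (m : ℕ) [NeZero m] : Finset (Fin m →₀ ℕ) :=
  (Finset.univ.finsuppAntidiag m).filter AdmP

def lam (f : MvPolynomial (Fin m) (ZMod 2)) : ZMod 2 := ∑ μ ∈ Dset m, coeff μ f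

lemma lam_add (p q : MvPolynomial (Fin m) (ZMod 2)) : lam (p + q) = lam p + lam q := by
  unfold lam
  rw [← Finset.sum_add_distrib]
  exact Finset.sum_congr rfl fun μ _ => by simp

lemma lam_sub (p q : MvPolynomial (Fin m) (ZMod 2)) : lam (p - q) = lam p - lam q := by
  unfold lam
  rw [← Finset.sum_sub_distrib]
  exact Finset.sum_congr rfl fun μ _ => by simp

lemma lam_mul_monomial (g : MvPolynomial (Fin m) (ZMod 2)) (v : Fin m →₀ ℕ) :
    lam (g * monomial v 1) = ∑ μ ∈ Dset m, if v ≤ μ then coeff (μ - v) g else 0 := by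
  unfold lam
  apply Finset.sum_congr rfl
  intro μ _
  rw [coeff_mul_monomial']
  split <;> simp


lemma adm_iff {i : ℕ} (h2 : 2 ≤ i) (him : i ≤ m) (ν : Fin m →₀ ℕ) :
    AdmP (ν + Finsupp.single ((i - 1 : ℕ) : Fin m) 2)
      ↔ AdmP (ν + (Finsupp.single ((i - 2 : ℕ) : Fin m) 1
          + Finsupp.single ((i - 1 : ℕ) : Fin m) 1)) := by
  have ha : (((i - 1 : ℕ) : Fin m) : ℕ) = i - 1 := Fin.val_cast_of_lt (by omega)
  have hb : (((i - 2 : ℕ) : Fin m) : ℕ) = i - 2 := Fin.val_cast_of_lt (by omega)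
  have hA : ∀ d, pSum d (ν + Finsupp.single ((i - 1 : ℕ) : Fin m) 2)
      = pSum d ν + (if i - 1 < d then 2 else 0) := by
    intro d; rw [pSum_add, pSum_single, ha]
  have hB : ∀ d, pSum d (ν + (Finsupp.single ((i - 2 : ℕ) : Fin m) 1
        + Finsupp.single ((i - 1 : ℕ) : Fin m) 1))
      = pSum d ν + ((if i - 2 < d then 1 else 0) + (if i - 1 < d then 1 else 0)) := by
    intro d; rw [pSum_add, pSum_add, pSum_single, pSum_single, ha, hb]
  constructor
  · intro h d hd1 hdm
    rw [hB]
    by_cases hc1 : i ≤ d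
    · have h1 := h d hd1 hdm
      rw [hA, if_pos (by omega)] at h1
      rw [if_pos (by omega), if_pos (by omega)]
      omega
    · by_cases hc2 : d = i - 1
      · have hi := h i (by omega) him
        rw [hA, if_pos (by omega)] at hi
        have hmono := pSum_mono_d (show d ≤ i by omega) ν
        rw [if_pos (by omega), if_neg (by omega)]
        omega
      · have h1 := h d hd1 hdm
        rw [hA, if_neg (by omega)] at h1
        rw [if_neg (by omega), if_neg (by omega)]
        omega
  · intro h d hd1 hdm
    rw [hA]
    by_cases hc1 : i ≤ d
    · have h1 := h d hd1 hdm
      rw [hB, if_pos (by omega), if_pos (by omega)] at h1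
      rw [if_pos (by omega)]
      omega
    · have h1 := h d hd1 hdm
      rw [hB] at h1
      rw [if_neg (by omega)]
      split_ifs at h1 <;> omega

lemma sum_univ_single (a : Fin m) (c : ℕ) : ∑ k : Fin m, Finsupp.single a c k = c := by
  rw [Finset.sum_eq_single a]
  · rw [Finsupp.single_apply, if_pos rfl]
  · intro b _ hb
    rw [Finsupp.single_apply, if_neg (Ne.symm hb)]
  · simp

lemma step_mem {v w : Fin m →₀ ℕ}
    (hsum : ∑ k : Fin m, v k = ∑ k : Fin m, w k)
    (hadm : ∀ ν : Fin m →₀ ℕ, AdmP (ν + v) → AdmP (ν + w)) {μ : Fin m →₀ ℕ}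
    (h : μ ∈ (Dset m).filter (fun μ => v ≤ μ)) :
    μ - v + w ∈ (Dset m).filter (fun μ => w ≤ μ) := by
  classical
  rw [Finset.mem_filter] at h ⊢
  obtain ⟨hD, hv⟩ := h
  rw [Dset, Finset.mem_filter, Finset.mem_finsuppAntidiag] at hD ⊢
  obtain ⟨⟨hDsum, -⟩, hDadm⟩ := hD
  have hμ : μ - v + v = μ := tsub_add_cancel_of_le hv
  refine ⟨⟨⟨?_, Finset.subset_univ _⟩, ?_⟩, ?_⟩
  · have h1 : ∀ u u' : Fin m →₀ ℕ, Finset.univ.sum ⇑(u + u') = ∑ k : Fin m, u k + ∑ k : Fin m, u' k := by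
      intro u u'
      rw [← Finset.sum_add_distrib]
      exact Finset.sum_congr rfl fun k _ => rfl
    have h2 := h1 (μ - v) w
    have h3 := h1 (μ - v) v
    rw [hμ] at h3
    rw [h2, ← hsum, ← h3, hDsum]
  · exact hadm (μ - v) (by rw [hμ]; exact hDadm)
  · exact le_add_self

lemma lam_rel (g : MvPolynomial (Fin m) (ZMod 2)) {i : ℕ} (h2 : 2 ≤ i) (him : i ≤ m) :
    lam (g * X ((i - 1 : ℕ) : Fin m) ^ 2)
      = lam (g * (X ((i - 2 : ℕ) : Fin m) * X ((i - 1 : ℕ) : Fin m))) := by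
  classical
  have hXX : (X ((i - 2 : ℕ) : Fin m) * X ((i - 1 : ℕ) : Fin m)
        : MvPolynomial (Fin m) (ZMod 2))
      = monomial (Finsupp.single ((i - 2 : ℕ) : Fin m) 1
          + Finsupp.single ((i - 1 : ℕ) : Fin m) 1) 1 := by
    rw [X, X, monomial_mul, one_mul]
  rw [X_pow_eq_monomial, hXX, lam_mul_monomial, lam_mul_monomial,
    ← Finset.sum_filter, ← Finset.sum_filter]
  set v₁ : Fin m →₀ ℕ := Finsupp.single ((i - 1 : ℕ) : Fin m) 2 with hv₁
  set v₂ : Fin m →₀ ℕ := Finsupp.single ((i - 2 : ℕ) : Fin m) 1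
      + Finsupp.single ((i - 1 : ℕ) : Fin m) 1 with hv₂
  have hsum : ∑ k : Fin m, v₁ k = ∑ k : Fin m, v₂ k := by
    have h1 : ∑ k : Fin m, v₂ k = ∑ k : Fin m, (Finsupp.single ((i - 2 : ℕ) : Fin m) 1) k
        + ∑ k : Fin m, (Finsupp.single ((i - 1 : ℕ) : Fin m) 1) k := by
      rw [← Finset.sum_add_distrib]
      exact Finset.sum_congr rfl fun k _ => rfl
    rw [hv₁, h1, sum_univ_single, sum_univ_single, sum_univ_single]
  apply Finset.sum_nbij' (i := fun μ => μ - v₁ + v₂) (j := fun μ => μ - v₂ + v₁)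
  · intro μ hμ
    exact step_mem hsum (fun ν => (adm_iff h2 him ν).1) hμ
  · intro μ hμ
    exact step_mem hsum.symm (fun ν => (adm_iff h2 him ν).2) hμ
  · intro μ hμ
    rw [Finset.mem_filter] at hμ
    rw [add_tsub_cancel_right, tsub_add_cancel_of_le hμ.2]
  · intro μ hμ
    rw [Finset.mem_filter] at hμ
    rw [add_tsub_cancel_right, tsub_add_cancel_of_le hμ.2]
  · intro μ hμ
    rw [add_tsub_cancel_right]

lemma lam_rel1 (g : MvPolynomial (Fin m) (ZMod 2)) :
    lam (g * X ((0 : ℕ) : Fin m) ^ 2) = 0 := by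
  classical
  rw [X_pow_eq_monomial, lam_mul_monomial]
  apply Finset.sum_eq_zero
  intro μ hμ
  rw [if_neg]
  intro hle
  have hAdm : AdmP μ := by
    rw [Dset, Finset.mem_filter] at hμ
    exact hμ.2
  have h1 := hAdm 1 le_rfl one_le_m
  have h3 := pSum_mono_nu (d := 1) hle
  rw [pSum_single, if_pos] at h3
  · omega
  · rw [Fin.val_cast_of_lt (Nat.pos_of_ne_zero (NeZero.ne m))]
    omega


def Tideal (m : ℕ) [NeZero m] : Ideal (MvPolynomial (Fin m) (ZMod 2)) where
  carrier := {f | ∀ g, lam (g * f) = 0}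
  add_mem' := fun {a b} ha hb g => by rw [mul_add, lam_add, ha g, hb g, add_zero]
  zero_mem' := fun g => by
    rw [mul_zero]
    unfold lam
    simp
  smul_mem' := fun c f h g => by
    rw [smul_eq_mul, ← mul_assoc]
    exact h (g * c)

lemma Qrel_le : Qrel m ≤ Tideal m := by
  rw [Qrel, Ideal.span_le]
  rintro f ⟨i, hi, rfl⟩
  rw [Set.mem_Icc] at hi
  show ∀ g, lam (g * _) = 0
  intro g
  dsimp only
  by_cases hi1 : i = 1
  · subst hi1
    rw [if_pos rfl, sub_zero]
    exact lam_rel1 g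
  · rw [if_neg hi1, mul_sub, lam_sub, lam_rel g (by omega) hi.2, sub_self]

lemma mono_ne_zero {ν : Fin m →₀ ℕ} (hν : ν ∈ Dset m) :
    Ideal.Quotient.mk (Qrel m) (monomial ν (1 : ZMod 2)) ≠ 0 := by
  classical
  intro h
  have hmem : monomial ν (1 : ZMod 2) ∈ Qrel m := (Ideal.Quotient.eq_zero_iff_mem).1 h
  have hT : ∀ g, lam (g * monomial ν (1 : ZMod 2)) = 0 := Qrel_le hmem
  have h1 := hT 1
  rw [one_mul] at h1
  have hl : lam (monomial ν (1 : ZMod 2)) = 1 := by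
    unfold lam
    rw [Finset.sum_eq_single ν]
    · simp [coeff_monomial]
    · intro b _ hb
      simp [coeff_monomial, hb, Ne.symm hb]
    · intro h'
      exact absurd hν h'
  rw [hl] at h1
  exact one_ne_zero h1

def toNu (m : ℕ) [NeZero m] (e : ℕ → ℕ) : Fin m →₀ ℕ :=
  Finsupp.equivFunOnFinite.symm (fun j : Fin m => e ((j : ℕ) + 1))

lemma toNu_apply (e : ℕ → ℕ) (j : Fin m) : toNu m e j = e ((j : ℕ) + 1) := rfl

lemma prod_eq_mk (e : ℕ → ℕ) :
    ∏ i ∈ Icc 1 m, xQ m i ^ e i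
      = Ideal.Quotient.mk (Qrel m) (monomial (toNu m e) (1 : ZMod 2)) := by
  have hmon : (monomial (toNu m e) (1 : ZMod 2)) = ∏ j : Fin m, X j ^ e ((j : ℕ) + 1) := by
    rw [monomial_eq, C_1, one_mul, Finsupp.prod_pow]
    exact Finset.prod_congr rfl fun j _ => rfl
  rw [hmon, map_prod]
  simp only [map_pow]
  apply Finset.prod_nbij' (i := fun a => ((a - 1 : ℕ) : Fin m)) (j := fun b => (b : ℕ) + 1)
  · intro a _
    exact Finset.mem_univ _
  · intro b _
    have := b.isLt
    rw [mem_Icc]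
    omega
  · intro a ha
    rw [mem_Icc] at ha
    rw [Fin.val_cast_of_lt (by omega)]
    omega
  · intro b _
    rw [Nat.add_sub_cancel, Fin.cast_val_eq_self]
  · intro a ha
    rw [mem_Icc] at ha
    rw [Fin.val_cast_of_lt (by omega), Nat.sub_add_cancel ha.1]
    rfl

lemma pSum_toNu (e : ℕ → ℕ) {d : ℕ} (hdm : d ≤ m) :
    pSum d (toNu m e) = ∑ i ∈ Icc 1 d, e i := by
  unfold pSum
  rw [← Finset.sum_filter]
  apply Finset.sum_nbij' (i := fun k : Fin m => (k : ℕ) + 1)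
    (j := fun a => ((a - 1 : ℕ) : Fin m))
  · intro k hk
    rw [Finset.mem_filter] at hk
    rw [mem_Icc]
    omega
  · intro a ha
    rw [mem_Icc] at ha
    rw [Finset.mem_filter]
    refine ⟨Finset.mem_univ _, ?_⟩
    rw [Fin.val_cast_of_lt (by omega)]
    omega
  · intro k hk
    rw [Nat.add_sub_cancel, Fin.cast_val_eq_self]
  · intro a ha
    rw [mem_Icc] at ha
    rw [Fin.val_cast_of_lt (by omega)]
    omega
  · intro k hk
    rfl

lemma sum_toNu (e : ℕ → ℕ) : ∑ k : Fin m, toNu m e k = ∑ i ∈ Icc 1 m, e i := by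
  have h : ∑ k : Fin m, toNu m e k = pSum m (toNu m e) := by
    unfold pSum
    exact Finset.sum_congr rfl fun k _ => (if_pos k.isLt).symm
  rw [h, pSum_toNu e le_rfl]

end Aux

/-- A degree-`m` monomial `x_1^{e_1} ⋯ x_m^{e_m}` is `0` in `Q_m` iff
`e_1 + ⋯ + e_d > d` for some `1 ≤ d ≤ m`. -/

theorem statement1 (m : ℕ) [NeZero m] (hm : 1 ≤ m) (e : ℕ → ℕ)
    (he : ∑ i ∈ Finset.Icc 1 m, e i = m) :
    (∏ i ∈ Finset.Icc 1 m, xQ m i ^ e i) = 0 ↔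
      ∃ d, 1 ≤ d ∧ d ≤ m ∧ d < ∑ i ∈ Finset.Icc 1 d, e i := by

  classical
  constructor
  · intro h0
    by_contra hno
    push_neg at hno
    have hD : toNu m e ∈ Dset m := by
      rw [Dset, Finset.mem_filter, Finset.mem_finsuppAntidiag]
      refine ⟨⟨?_, Finset.subset_univ _⟩, ?_⟩
      · rw [show Finset.univ.sum ⇑(toNu m e) = ∑ k : Fin m, toNu m e k from rfl, sum_toNu, he]
      · intro d hd1 hdm
        rw [pSum_toNu e hdm]
        exact hno d hd1 hdm
    have hne := mono_ne_zero hD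
    rw [← prod_eq_mk] at hne
    exact hne h0
  · rintro ⟨d, hd1, hdm, hdv⟩
    exact forward_aux _ e rfl ⟨d, hdm, hdv⟩
end
end

section
/- Let m ≥ 1 and let e_1,…,e_m be nonnegative integers with e_1 + ⋯ + e_m = m. Then in Q_m the monomial x_1^{e_1}⋯x_m^{e_m} equals either 0 or x_1 x_2 ⋯ x_m; consequently the span of degree-m monomials in Q_m is the one-dimensional ℤ/2-subspace spanned by x_1⋯x_m. -/
open MvPolynomial Finset
open Fin.NatCast

noncomputable section

lemma xQ_sq_s11 (m : ℕ) [NeZero m] {i : ℕ} (hi : i ∈ Finset.Icc 1 m) :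
    xQ m i ^ 2 = if i = 1 then 0 else xQ m (i - 1) * xQ m i := by
  have hmem : (X ((i - 1 : ℕ) : Fin m) ^ 2 -
      (if i = 1 then 0 else X ((i - 2 : ℕ) : Fin m) * X ((i - 1 : ℕ) : Fin m))) ∈ Qrel m :=
    Ideal.subset_span ⟨i, by simpa using hi, rfl⟩
  have h0 := (Ideal.Quotient.eq_zero_iff_mem).mpr hmem
  rw [map_sub, sub_eq_zero] at h0
  by_cases h1 : i = 1
  · simp only [h1, if_true, map_zero, map_pow] at h0 ⊢
    simpa only [xQ, h1, map_pow] using h0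
  · simp only [h1, if_false] at h0 ⊢
    simp only [xQ, Nat.sub_sub]
    simpa [map_pow, map_mul] using h0

lemma xQ_one_pow (m : ℕ) [NeZero m] (hm : 1 ≤ m) {b : ℕ} (hb : 2 ≤ b) :
    xQ m 1 ^ b = 0 := by
  have h := xQ_sq_s11 m (i := 1) (by simp [hm])
  simp only [if_true] at h
  obtain ⟨k, rfl⟩ : ∃ k, b = k + 2 := ⟨b - 2, by omega⟩
  rw [pow_add, h, mul_zero]

lemma xQ_pow_shift (m : ℕ) [NeZero m] {j : ℕ} (hj : j ∈ Finset.Icc 1 m) (hj2 : 2 ≤ j)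
    (b : ℕ) : xQ m j ^ (b + 2) = xQ m (j - 1) * xQ m j ^ (b + 1) := by
  have h := xQ_sq_s11 m hj
  rw [if_neg (by omega)] at h
  calc xQ m j ^ (b + 2) = xQ m j ^ b * xQ m j ^ 2 := by ring
    _ = xQ m j ^ b * (xQ m (j - 1) * xQ m j) := by rw [h]
    _ = xQ m (j - 1) * xQ m j ^ (b + 1) := by ring

lemma key (m : ℕ) [NeZero m] (hm : 1 ≤ m) : ∀ n (e : ℕ → ℕ),
    (∑ i ∈ Finset.Icc 1 m, i * e i ≤ n) → (∑ i ∈ Finset.Icc 1 m, e i = m) →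
    ((∏ i ∈ Finset.Icc 1 m, xQ m i ^ e i) = 0 ∨
      (∏ i ∈ Finset.Icc 1 m, xQ m i ^ e i) = ∏ i ∈ Finset.Icc 1 m, xQ m i) := by
  intro n
  induction n with
  | zero =>
    intro e hw hs
    exfalso
    have h1 : (1 : ℕ) ∈ Finset.Icc 1 m := by simp [hm]
    have : ∀ i ∈ Finset.Icc 1 m, e i = 0 := by
      intro i hi
      have hi1 : 1 ≤ i := by simp at hi; omega
      have hterm : i * e i = 0 := by
        have h := Finset.single_le_sum (f := fun i => i * e i) (fun i _ => Nat.zero_le _) hi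
        omega
      rcases Nat.mul_eq_zero.mp hterm with h | h
      · omega
      · exact h
    rw [Finset.sum_eq_zero this] at hs
    omega
  | succ n ih =>
    intro e hw hs
    by_cases hall : ∀ i ∈ Finset.Icc 1 m, e i = 1
    · right
      exact Finset.prod_congr rfl fun i hi => by rw [hall i hi, pow_one]
    · push_neg at hall
      obtain ⟨j0, hj0, hj0ne⟩ := hall
      by_cases h2 : ∃ j ∈ Finset.Icc 1 m, 2 ≤ e j
      · obtain ⟨j, hj, hej⟩ := h2
        by_cases hj1 : j = 1
        · left
          subst hj1
          exact Finset.prod_eq_zero hj (xQ_one_pow m hm hej)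
        · -- j ≥ 2 : shift
          have hj2 : 2 ≤ j := by simp at hj; omega
          set e' : ℕ → ℕ := fun i => if i = j then e j - 1 else if i = j - 1 then e (j-1) + 1 else e i with he'
          have hjm : j ∈ Finset.Icc 1 m := hj
          have hj1m : j - 1 ∈ (Finset.Icc 1 m).erase j := by
            simp at hj ⊢; omega
          have ht : ∀ i ∈ ((Finset.Icc 1 m).erase j).erase (j-1), e' i = e i := by
            intro i hi
            simp only [Finset.mem_erase] at hi
            simp [he', hi.1, hi.2.1]
          have he'j : e' j = e j - 1 := by simp [he']
          have he'j1 : e' (j-1) = e (j-1) + 1 := by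
            simp [he', show j - 1 ≠ j by omega]
          have hprod : ∀ f : ℕ → ℕ, ∏ i ∈ Finset.Icc 1 m, xQ m i ^ f i =
              xQ m j ^ f j * (xQ m (j-1) ^ f (j-1) *
                ∏ i ∈ ((Finset.Icc 1 m).erase j).erase (j-1), xQ m i ^ f i) := by
            intro f
            rw [← Finset.mul_prod_erase _ _ hjm, ← Finset.mul_prod_erase _ _ hj1m]
          have hsum : ∀ f : ℕ → ℕ, ∑ i ∈ Finset.Icc 1 m, f i =
              f j + (f (j-1) + ∑ i ∈ ((Finset.Icc 1 m).erase j).erase (j-1), f i) := by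
            intro f
            rw [← Finset.add_sum_erase _ _ hjm, ← Finset.add_sum_erase _ _ hj1m]
          have htail : ∑ i ∈ ((Finset.Icc 1 m).erase j).erase (j-1), e' i =
              ∑ i ∈ ((Finset.Icc 1 m).erase j).erase (j-1), e i :=
            Finset.sum_congr rfl ht
          have htailw : ∑ i ∈ ((Finset.Icc 1 m).erase j).erase (j-1), i * e' i =
              ∑ i ∈ ((Finset.Icc 1 m).erase j).erase (j-1), i * e i :=
            Finset.sum_congr rfl fun i hi => by rw [ht i hi]
          have hs' : ∑ i ∈ Finset.Icc 1 m, e' i = m := by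
            rw [hsum e', htail, he'j, he'j1]
            rw [hsum e] at hs
            omega
          have hw' : ∑ i ∈ Finset.Icc 1 m, i * e' i ≤ n := by
            rw [hsum (fun i => i * e' i), htailw, he'j, he'j1]
            rw [hsum (fun i => i * e i)] at hw
            obtain ⟨k, hk⟩ : ∃ k, e j = k + 2 := ⟨e j - 2, by omega⟩
            rw [hk] at hw ⊢
            have h1 : j * (k + 2 - 1) = j * k + j := by
              rw [show k + 2 - 1 = k + 1 from rfl]; ring
            have h2 : j * (k + 2) = j * k + j + j := by ring
            have h3 : (j-1) * (e (j-1) + 1) = (j-1) * e (j-1) + (j-1) := by ring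
            omega
          have hpe : ∏ i ∈ Finset.Icc 1 m, xQ m i ^ e i =
              ∏ i ∈ Finset.Icc 1 m, xQ m i ^ e' i := by
            rw [hprod e, hprod e', he'j, he'j1]
            have htailp : ∏ i ∈ ((Finset.Icc 1 m).erase j).erase (j-1), xQ m i ^ e' i =
                ∏ i ∈ ((Finset.Icc 1 m).erase j).erase (j-1), xQ m i ^ e i :=
              Finset.prod_congr rfl fun i hi => by rw [ht i hi]
            rw [htailp]
            obtain ⟨b, hb⟩ : ∃ b, e j = b + 2 := ⟨e j - 2, by omega⟩
            rw [hb]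
            have hb1 : b + 2 - 1 = b + 1 := by omega
            rw [hb1, xQ_pow_shift m hj hj2 b, pow_succ]
            ring
          rw [hpe]
          exact ih e' hw' hs'
      · -- all e i ≤ 1, some e j0 ≠ 1, so sum < m : contradiction
        exfalso
        push_neg at h2
        have hlt : ∑ i ∈ Finset.Icc 1 m, e i < ∑ i ∈ Finset.Icc 1 m, 1 := by
          apply Finset.sum_lt_sum
          · intro i hi; have := h2 i hi; omega
          · exact ⟨j0, hj0, by have := h2 j0 hj0; omega⟩
        simp [Nat.card_Icc] at hlt
        omega

/-- Every degree-`m` monomial in `Q_m` equals `0` or `x_1 ⋯ x_m`; consequently the span of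
the degree-`m` monomials is the `ℤ/2`-subspace spanned by `x_1 ⋯ x_m`. -/
theorem statement11 (m : ℕ) [NeZero m] (hm : 1 ≤ m) :
    (∀ e : ℕ → ℕ, (∑ i ∈ Finset.Icc 1 m, e i = m) →
      ((∏ i ∈ Finset.Icc 1 m, xQ m i ^ e i) = 0 ∨
        (∏ i ∈ Finset.Icc 1 m, xQ m i ^ e i) = ∏ i ∈ Finset.Icc 1 m, xQ m i)) ∧
    Submodule.span (ZMod 2)
        {q : Qring m | ∃ e : ℕ → ℕ, (∑ i ∈ Finset.Icc 1 m, e i = m) ∧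
          q = ∏ i ∈ Finset.Icc 1 m, xQ m i ^ e i} =
      Submodule.span (ZMod 2) {(∏ i ∈ Finset.Icc 1 m, xQ m i)} := by
  
  have hkey : ∀ e : ℕ → ℕ, (∑ i ∈ Finset.Icc 1 m, e i = m) →
      ((∏ i ∈ Finset.Icc 1 m, xQ m i ^ e i) = 0 ∨
        (∏ i ∈ Finset.Icc 1 m, xQ m i ^ e i) = ∏ i ∈ Finset.Icc 1 m, xQ m i) :=
    fun e he => key m hm (∑ i ∈ Finset.Icc 1 m, i * e i) e le_rfl he
  refine ⟨hkey, le_antisymm ?_ ?_⟩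
  · rw [Submodule.span_le]
    rintro q ⟨e, he, rfl⟩
    rcases hkey e he with h | h
    · rw [h]; exact Submodule.zero_mem _
    · rw [h]; exact Submodule.subset_span rfl
  · rw [Submodule.span_le]
    rintro q hq
    rw [Set.mem_singleton_iff] at hq
    subst hq
    exact Submodule.subset_span ⟨fun _ => 1, by simp, by simp⟩
end
end
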